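/- Let c_p, c_s ∈ ℝ with c_s ≠ 0 and 3c_p² − 4c_s² ≠ 0, and set a = (c_p²−c_s²)/(c_s²(3c_p²−4c_s²)), b = −(c_p²−2c_s²)/(2c_s²(3c_p²−4c_s²)), c = 1/c_s². Let G be the 6×6 real matrix whose upper-left 3×3 block is [[a,b,b],[b,a,b],[b,b,a]], whose lower-right 3×3 block is c·I₃, and whose off-diagonal blocks vanish. Let P be the 6×6 block-diagonal matrix whose upper-left 3×3 block is [[1/√3, 1/√3, 1/√3],[1/√2, −1/√2, 0],[1/√6, 1/√6, −2/√6]] and whose lower-right block is I₃, and let Λ = diag(1/(3c_p²−4c_s²), 1/(2c_s²), 1/(2c_s²), 1/c_s², 1/c_s², 1/c_s²). Then P·Pᵀ = I₆ (P is orthogonal) and P·G·Pᵀ = Λ; equivalently G = Pᵀ·Λ·P. -/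

import Mathlib

open Matrix

set_option maxHeartbeats 1600000

/-- Orthogonal eigendecomposition `G = Pᵀ Λ P` of the block `G = ρ C⁻¹` of the
symmetrizer in the symmetric matrix form of the velocity-stress equations. -/
theorem symmetrizer_eigendecomposition (cp cs : ℝ) (hcs : cs ≠ 0)
    (hden : 3 * cp ^ 2 - 4 * cs ^ 2 ≠ 0)
    (a b c : ℝ)
    (ha : a = (cp ^ 2 - cs ^ 2) / (cs ^ 2 * (3 * cp ^ 2 - 4 * cs ^ 2)))
    (hb : b = -(cp ^ 2 - 2 * cs ^ 2) / (2 * cs ^ 2 * (3 * cp ^ 2 - 4 * cs ^ 2)))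
    (hc : c = 1 / cs ^ 2)
    (G P Λ : Matrix (Fin 3 ⊕ Fin 3) (Fin 3 ⊕ Fin 3) ℝ)
    (hG : G = Matrix.fromBlocks
      !![a, b, b; b, a, b; b, b, a]
      0 0 (c • (1 : Matrix (Fin 3) (Fin 3) ℝ)))
    (hP : P = Matrix.fromBlocks
      !![1 / Real.sqrt 3, 1 / Real.sqrt 3, 1 / Real.sqrt 3;
         1 / Real.sqrt 2, -(1 / Real.sqrt 2), 0;
         1 / Real.sqrt 6, 1 / Real.sqrt 6, -(2 / Real.sqrt 6)]
      0 0 (1 : Matrix (Fin 3) (Fin 3) ℝ))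
    (hΛ : Λ = Matrix.fromBlocks
      (Matrix.diagonal ![1 / (3 * cp ^ 2 - 4 * cs ^ 2), 1 / (2 * cs ^ 2), 1 / (2 * cs ^ 2)])
      0 0
      (Matrix.diagonal ![1 / cs ^ 2, 1 / cs ^ 2, 1 / cs ^ 2])) :
    P * Pᵀ = 1 ∧ P * G * Pᵀ = Λ ∧ G = Pᵀ * Λ * P := by
  have h3 : Real.sqrt 3 ^ 2 = 3 := Real.sq_sqrt (by norm_num)
  have h2 : Real.sqrt 2 ^ 2 = 2 := Real.sq_sqrt (by norm_num)
  have h6 : Real.sqrt 6 ^ 2 = 6 := Real.sq_sqrt (by norm_num)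
  have h3' : Real.sqrt 3 ≠ 0 := by positivity
  have h2' : Real.sqrt 2 ≠ 0 := by positivity
  have h6' : Real.sqrt 6 ≠ 0 := by positivity
  have h1 : P * Pᵀ = 1 := by
    rw [hP]
    ext i j
    rcases i with i | i <;> rcases j with j | j <;> fin_cases i <;> fin_cases j <;>
      simp [Matrix.mul_apply, Fin.sum_univ_succ, Matrix.one_apply] <;>
      field_simp <;> nlinarith [h2, h3, h6]
  have h1' : Pᵀ * P = 1 := mul_eq_one_comm.mp h1
  have hX : cp ^ 2 * 3 - cs ^ 2 * 4 ≠ 0 := by contrapose! hden; linarith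
  have hX2 : -(cs ^ 2 * 4) + cp ^ 2 * 3 ≠ 0 := by contrapose! hden; linarith
  have hGP : G * Pᵀ = Pᵀ * Λ := by
    rw [hP, hG, hΛ]
    ext i j
    rcases i with i | i <;> rcases j with j | j <;> fin_cases i <;> fin_cases j <;>
      simp [Matrix.mul_apply, Fin.sum_univ_succ, Matrix.one_apply, Matrix.diagonal,
        ha, hb, hc] <;>
      field_simp <;> ring_nf <;> field_simp <;> ring
  have h2' : P * G * Pᵀ = Λ := by
    calc P * G * Pᵀ = P * (G * Pᵀ) := by rw [Matrix.mul_assoc]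
      _ = P * (Pᵀ * Λ) := by rw [hGP]
      _ = (P * Pᵀ) * Λ := by rw [Matrix.mul_assoc]
      _ = Λ := by rw [h1, Matrix.one_mul]
  refine ⟨h1, h2', ?_⟩
  calc G = G * (Pᵀ * P) := by rw [h1', Matrix.mul_one]
    _ = (G * Pᵀ) * P := by rw [Matrix.mul_assoc]
    _ = Pᵀ * Λ * P := by rw [hGP]
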